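/- Under within-type exchangeability, for all times 0 ≤ s ≤ τ and all count vectors l ≤ m (componentwise) with 0 ≤ m_k ≤ n_k and 0 ≤ l_k ≤ m_k: P( T > s, T ≤ τ, and for every k: C_k(s) = m_k and C_k(τ) = l_k ) = [ Φ(m_1,…,m_L) − Φ(l_1,…,l_L) ] · (∏_{k=1}^L C(n_k, m_k) C(m_k, l_k)) · P( for each k: T^{(k)}_r > τ for 1 ≤ r ≤ l_k, s < T^{(k)}_r ≤ τ for l_k < r ≤ m_k, and T^{(k)}_r ≤ s for m_k < r ≤ n_k ). -/

import Mathlib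

open MeasureTheory Finset

/-- The survival signature of a structure function `φ`:
`Φ(c) = (∏_k C(n_k, c_k))⁻¹ · Σ_{x : exactly c_k working components of each type k} φ(x)`. -/
noncomputable def survSig {L : ℕ} (n : Fin L → ℕ)
    (φ : ((l : Fin L) → Fin (n l) → Bool) → Bool) (c : Fin L → ℕ) : ℝ :=
  (∑ x : (l : Fin L) → Fin (n l) → Bool,
      if (∀ l, (Finset.univ.filter fun j => x l j = true).card = c l) ∧ φ x = true
      then (1 : ℝ) else 0)
    / ∏ l, (Nat.choose (n l) (c l) : ℝ)

section Aux

lemma card_filter_perm {N : ℕ} (σ : Equiv.Perm (Fin N)) (p : Fin N → Prop) [DecidablePred p] :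
    (univ.filter fun i => p (σ i)).card = (univ.filter p).card := by
  apply Finset.card_bij (fun i _ => σ i)
  · intro a ha; simp only [mem_filter, mem_univ, true_and] at ha ⊢; exact ha
  · intro x _ y _ h; exact σ.injective h
  · intro x hx
    exact ⟨σ.symm x, by simpa using hx, σ.apply_symm_apply x⟩

lemma count_not {N : ℕ} (g : Fin N → Bool) :
    (univ.filter fun j : Fin N => (!g j) = true).card
      = N - (univ.filter fun j => g j = true).card := by
  have h : (univ.filter fun j : Fin N => (!g j) = true)
      = univ \ (univ.filter fun j => g j = true) := by
    ext j; simp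
  rw [h, Finset.card_sdiff_of_subset (Finset.filter_subset _ _), Finset.card_univ, Fintype.card_fin]

lemma count_le_card {N : ℕ} (c : Fin N → Bool) (l : ℕ) :
    (univ.filter fun g : Fin N → Bool =>
        (∀ j, g j = true → c j = true) ∧ (univ.filter fun j => g j = true).card = l).card
    = Nat.choose ((univ.filter fun j => c j = true).card) l := by
  classical
  rw [← Finset.card_powersetCard l (univ.filter fun j => c j = true)]
  refine Finset.card_bij' (fun g _ => univ.filter fun j => g j = true)
      (fun t _ => fun j => decide (j ∈ t)) ?hi ?hj ?li ?ri
  case hi =>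
    intro g hg
    simp only [mem_filter, mem_univ, true_and] at hg
    rw [Finset.mem_powersetCard]
    exact ⟨fun j hj => by simp only [mem_filter, mem_univ, true_and] at hj ⊢; exact hg.1 j hj,
      hg.2⟩
  case hj =>
    intro t ht
    rw [Finset.mem_powersetCard] at ht
    simp only [mem_filter, mem_univ, true_and, decide_eq_true_eq]
    constructor
    · intro j hj
      have := ht.1 hj
      simpa using this
    · rw [← ht.2]; congr 1; ext j; simp
  case li => intro g hg; funext j; simp
  case ri => intro t ht; ext j; simp

lemma count_ge_card {N : ℕ} (c : Fin N → Bool) (mm : ℕ) (hm : mm ≤ N) :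
    (univ.filter fun g : Fin N → Bool =>
        (∀ j, c j = true → g j = true) ∧ (univ.filter fun j => g j = true).card = mm).card
    = Nat.choose (N - (univ.filter fun j => c j = true).card) (N - mm) := by
  classical
  rw [← count_not c, ← count_le_card (fun j => !c j) (N - mm)]
  refine Finset.card_bij' (fun g _ => fun j => !g j) (fun h _ => fun j => !h j) ?hi ?hj ?li ?ri
  case hi =>
    intro g hg
    simp only [mem_filter, mem_univ, true_and] at hg ⊢
    constructor
    · intro j hj
      simp only [Bool.not_eq_true'] at hj ⊢
      cases hcj : c j
      · rfl
      · exact absurd (hg.1 j hcj) (by simp [hj])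
    · rw [count_not, hg.2]
  case hj =>
    intro h hh
    simp only [mem_filter, mem_univ, true_and] at hh ⊢
    constructor
    · intro j hj
      simp only [Bool.not_eq_true']
      cases hhj : h j
      · rfl
      · exact absurd (hh.1 j hhj) (by simp [hj])
    · rw [count_not, hh.2]
      omega
  case li => intro g _; funext j; simp
  case ri => intro h _; funext j; simp

lemma exists_perm_thresh {N : ℕ} (a b : Fin N → Bool) (hba : ∀ j, b j = true → a j = true)
    {mm ll : ℕ} (hma : (univ.filter fun j => a j = true).card = mm)
    (hlb : (univ.filter fun j => b j = true).card = ll) :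
    ∃ σ : Equiv.Perm (Fin N), (∀ j : Fin N, (a (σ j) = true ↔ (j : ℕ) < mm))
      ∧ (∀ j : Fin N, (b (σ j) = true ↔ (j : ℕ) < ll)) := by
  classical
  set f : Fin N → ℕ := fun j => if b j then 0 else if a j then 1 else 2 with hf
  set σ := Tuple.sort f with hσ
  have hmono : Monotone (f ∘ σ) := Tuple.monotone_sort f
  have hbf : ∀ j, (b j = true ↔ f j ≤ 0) := by
    intro j; cases hbj : b j <;> cases haj : a j <;> simp [hf, hbj, haj]
  have haf : ∀ j, (a j = true ↔ f j ≤ 1) := by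
    intro j
    cases haj : a j
    · have hbj : b j = false := by
        cases hbj : b j
        · rfl
        · exact absurd (hba j hbj) (by simp [haj])
      simp [hf, haj, hbj]
    · cases hbj : b j <;> simp [hf, haj, hbj]
  have cardl : Fintype.card {i // (f ∘ σ) i ≤ 0} = ll := by
    rw [Fintype.card_subtype]
    calc (univ.filter fun i => (f ∘ σ) i ≤ 0).card
        = (univ.filter fun i => b (σ i) = true).card := by
          apply congrArg
          apply Finset.filter_congr
          intro i _
          simp only [Function.comp]
          exact (hbf (σ i)).symm
      _ = ll := by rw [card_filter_perm σ (fun i => b i = true)]; exact hlb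
  have cardm : Fintype.card {i // (f ∘ σ) i ≤ 1} = mm := by
    rw [Fintype.card_subtype]
    calc (univ.filter fun i => (f ∘ σ) i ≤ 1).card
        = (univ.filter fun i => a (σ i) = true).card := by
          apply congrArg
          apply Finset.filter_congr
          intro i _
          simp only [Function.comp]
          exact (haf (σ i)).symm
      _ = mm := by rw [card_filter_perm σ (fun i => a i = true)]; exact hma
  refine ⟨σ, fun j => ?_, fun j => ?_⟩
  · rw [haf (σ j), ← cardm]
    rw [Fintype.card_subtype]
    exact (Tuple.lt_card_le_iff_apply_le_of_monotone (f := f ∘ σ) (a := 1) (j := j) hmono).symm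
  · rw [hbf (σ j), ← cardl]
    rw [Fintype.card_subtype]
    exact (Tuple.lt_card_le_iff_apply_le_of_monotone (f := f ∘ σ) (a := 0) (j := j) hmono).symm

lemma card_pi_filter {L : ℕ} (n : Fin L → ℕ) (Q : ∀ k, (Fin (n k) → Bool) → Prop)
    [∀ k, DecidablePred (Q k)] :
    (univ.filter fun x : (k : Fin L) → Fin (n k) → Bool => ∀ k, Q k (x k)).card
      = ∏ k, (univ.filter fun g : Fin (n k) → Bool => Q k g).card := by
  classical
  rw [← Fintype.card_subtype]
  rw [Fintype.card_congr (Equiv.subtypePiEquivPi (p := Q))]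
  rw [Fintype.card_pi]
  exact Finset.prod_congr rfl fun k _ => Fintype.card_subtype _

end Aux

theorem stmt_16
    {Ω : Type*} [MeasurableSpace Ω] (P : Measure Ω) [IsProbabilityMeasure P]
    {L : ℕ} (hL : 1 ≤ L) (n : Fin L → ℕ) (hn : ∀ k, 1 ≤ n k)
    (T : (k : Fin L) → Fin (n k) → Ω → ℝ)
    (hTmeas : ∀ k j, Measurable (T k j))
    (hexch : ∀ σ : (k : Fin L) → Equiv.Perm (Fin (n k)),
      Measure.map (fun ω (k : Fin L) (j : Fin (n k)) => T k (σ k j) ω) P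
        = Measure.map (fun ω (k : Fin L) (j : Fin (n k)) => T k j ω) P)
    (φ : ((k : Fin L) → Fin (n k) → Bool) → Bool) (hφ : Monotone φ)
    (Tsys : Ω → ℝ) (hTsys : Measurable Tsys)
    (hT : ∀ t : ℝ, 0 ≤ t →
      {ω | t < Tsys ω} = {ω | φ (fun k j => decide (t < T k j ω)) = true})
    (s τ : ℝ) (hs : 0 ≤ s) (hsτ : s ≤ τ)
    (l m : Fin L → ℕ) (hlm : ∀ k, l k ≤ m k) (hm : ∀ k, m k ≤ n k) :
    (P {ω | s < Tsys ω ∧ Tsys ω ≤ τ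
        ∧ ∀ k, (Finset.univ.filter fun j : Fin (n k) => s < T k j ω).card = m k
            ∧ (Finset.univ.filter fun j : Fin (n k) => τ < T k j ω).card = l k}).toReal
    = (survSig n φ m - survSig n φ l)
        * (∏ k, (Nat.choose (n k) (m k) : ℝ) * (Nat.choose (m k) (l k) : ℝ))
        * (P {ω | ∀ k, ∀ r : Fin (n k),
            ((r : ℕ) < l k → τ < T k r ω)
            ∧ (l k ≤ (r : ℕ) ∧ (r : ℕ) < m k → s < T k r ω ∧ T k r ω ≤ τ)
            ∧ (m k ≤ (r : ℕ) → T k r ω ≤ s)}).toReal := by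
  classical
  have hTs : ∀ ω, s < Tsys ω ↔ φ (fun k j => decide (s < T k j ω)) = true := fun ω =>
    Set.ext_iff.mp (hT s hs) ω
  have hTτ : ∀ ω, τ < Tsys ω ↔ φ (fun k j => decide (τ < T k j ω)) = true := fun ω =>
    Set.ext_iff.mp (hT τ (hs.trans hsτ)) ω
  set S : Finset (((k : Fin L) → Fin (n k) → Bool) × ((k : Fin L) → Fin (n k) → Bool)) :=
    univ.filter (fun p =>
      (∀ k j, p.2 k j = true → p.1 k j = true) ∧
      (∀ k, (univ.filter fun j => p.1 k j = true).card = m k) ∧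
      (∀ k, (univ.filter fun j => p.2 k j = true).card = l k) ∧
      φ p.1 = true ∧ φ p.2 = false) with hSdef
  set E : (((k : Fin L) → Fin (n k) → Bool) × ((k : Fin L) → Fin (n k) → Bool)) → Set Ω :=
    fun p =>
    {ω | ∀ k j, (s < T k j ω ↔ p.1 k j = true) ∧ (τ < T k j ω ↔ p.2 k j = true)} with hEdef
  set R : Set Ω := {ω | ∀ k, ∀ r : Fin (n k),
            ((r : ℕ) < l k → τ < T k r ω)
            ∧ (l k ≤ (r : ℕ) ∧ (r : ℕ) < m k → s < T k r ω ∧ T k r ω ≤ τ)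
            ∧ (m k ≤ (r : ℕ) → T k r ω ≤ s)} with hRdef
  -- step 1: the LHS event is the disjoint union of the events E p, p ∈ S
  have hunion : {ω | s < Tsys ω ∧ Tsys ω ≤ τ
        ∧ ∀ k, (Finset.univ.filter fun j : Fin (n k) => s < T k j ω).card = m k
            ∧ (Finset.univ.filter fun j : Fin (n k) => τ < T k j ω).card = l k}
      = ⋃ p ∈ S, E p := by
    ext ω
    simp only [Set.mem_setOf_eq, Set.mem_iUnion, exists_prop]
    constructor
    · rintro ⟨h1, h2, h3⟩
      refine ⟨(fun k j => decide (s < T k j ω), fun k j => decide (τ < T k j ω)), ?_, ?_⟩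
      · rw [hSdef, mem_filter]
        refine ⟨mem_univ _, ?_, ?_, ?_, ?_, ?_⟩
        · intro k j hj
          simp only [decide_eq_true_eq] at hj ⊢
          exact lt_of_le_of_lt hsτ hj
        · intro k
          rw [← (h3 k).1]
          apply congrArg
          apply Finset.filter_congr
          intro j _
          simp
        · intro k
          rw [← (h3 k).2]
          apply congrArg
          apply Finset.filter_congr
          intro j _
          simp
        · exact (hTs ω).mp h1
        · have h4 : ¬ (τ < Tsys ω) := not_lt.mpr h2
          rw [hTτ ω] at h4
          simpa using h4
      · intro k j
        simp [hEdef]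
    · rintro ⟨p, hpS, hpE⟩
      rw [hSdef, mem_filter] at hpS
      obtain ⟨-, hba, hcm, hcl, hφ1, hφ2⟩ := hpS
      simp only [hEdef, Set.mem_setOf_eq] at hpE
      have hXs : (fun k j => decide (s < T k j ω)) = p.1 := by
        funext k j
        have := (hpE k j).1
        cases h : p.1 k j
        · simp only [h] at this ⊢
          simp [this]
        · simp only [h] at this ⊢
          simp [this]
      have hXτ : (fun k j => decide (τ < T k j ω)) = p.2 := by
        funext k j
        have := (hpE k j).2
        cases h : p.2 k j
        · simp only [h] at this ⊢
          simp [this]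
        · simp only [h] at this ⊢
          simp [this]
      refine ⟨?_, ?_, ?_⟩
      · rw [hTs ω, hXs]
        exact hφ1
      · by_contra hc
        push_neg at hc
        have h5 : φ (fun k j => decide (τ < T k j ω)) = true := (hTτ ω).mp hc
        rw [hXτ, hφ2] at h5
        exact Bool.false_ne_true h5
      · intro k
        constructor
        · rw [← hcm k]
          apply congrArg
          apply Finset.filter_congr
          intro j _
          exact (hpE k j).1
        · rw [← hcl k]
          apply congrArg
          apply Finset.filter_congr
          intro j _
          exact (hpE k j).2
  -- measurability of the events E p
  have hlt : ∀ (t : ℝ) k j, MeasurableSet {ω | t < T k j ω} := fun t k j =>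
    measurableSet_lt measurable_const (hTmeas k j)
  have hEmeas : ∀ p, MeasurableSet (E p) := by
    intro p
    have : E p = ⋂ k, ⋂ j, ({ω | s < T k j ω ↔ p.1 k j = true}
        ∩ {ω | τ < T k j ω ↔ p.2 k j = true}) := by
      ext ω
      simp [hEdef, Set.mem_iInter, forall_and]
    rw [this]
    refine MeasurableSet.iInter fun k => MeasurableSet.iInter fun j => MeasurableSet.inter ?_ ?_
    · cases h : p.1 k j
      · convert (hlt s k j).compl using 1
        ext ω; simp
      · convert hlt s k j using 1
        ext ω; simp
    · cases h : p.2 k j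
      · convert (hlt τ k j).compl using 1
        ext ω; simp
      · convert hlt τ k j using 1
        ext ω; simp
  have hdisj : (↑S : Set (((k : Fin L) → Fin (n k) → Bool) × ((k : Fin L) → Fin (n k) → Bool))).PairwiseDisjoint E := by
    intro p hp q hq hpq
    rw [Function.onFun, Set.disjoint_left]
    intro ω hωp hωq
    apply hpq
    simp only [hEdef, Set.mem_setOf_eq] at hωp hωq
    have h1 : p.1 = q.1 := by
      funext k j
      rw [Bool.eq_iff_iff]
      rw [← (hωp k j).1, ← (hωq k j).1]
    have h2 : p.2 = q.2 := by
      funext k j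
      rw [Bool.eq_iff_iff]
      rw [← (hωp k j).2, ← (hωq k j).2]
    exact Prod.ext h1 h2
  -- step 2: each event E p, p ∈ S, has the same probability as R
  have hPeq : ∀ p ∈ S, P (E p) = P R := by
    intro p hp
    rw [hSdef, mem_filter] at hp
    obtain ⟨-, hba, hcm, hcl, -, -⟩ := hp
    choose σ hσa hσb using fun k => exists_perm_thresh (p.1 k) (p.2 k) (hba k) (hcm k) (hcl k)
    have hTpath : Measurable (fun ω (k : Fin L) (j : Fin (n k)) => T k j ω) :=
      measurable_pi_lambda _ fun k => measurable_pi_lambda _ fun j => hTmeas k j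
    have hTσ : Measurable (fun ω (k : Fin L) (j : Fin (n k)) => T k (σ k j) ω) :=
      measurable_pi_lambda _ fun k => measurable_pi_lambda _ fun j => hTmeas k (σ k j)
    set A₀ : Set ((k : Fin L) → Fin (n k) → ℝ) :=
      {f | ∀ k j, (s < f k j ↔ (j : ℕ) < m k) ∧ (τ < f k j ↔ (j : ℕ) < l k)} with hA₀
    have hA₀meas : MeasurableSet A₀ := by
      have heval : ∀ (k : Fin L) (j : Fin (n k)),
          Measurable fun f : (k : Fin L) → Fin (n k) → ℝ => f k j := fun k j =>
        (measurable_pi_apply j).comp (measurable_pi_apply k)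
      have : A₀ = ⋂ k, ⋂ j, ({f : (k : Fin L) → Fin (n k) → ℝ | s < f k j ↔ (j : ℕ) < m k}
          ∩ {f | τ < f k j ↔ (j : ℕ) < l k}) := by
        ext f
        simp [hA₀, Set.mem_iInter, forall_and]
      rw [this]
      refine MeasurableSet.iInter fun k => MeasurableSet.iInter fun j =>
        MeasurableSet.inter ?_ ?_
      · by_cases h : (j : ℕ) < m k
        · have : {f : (k : Fin L) → Fin (n k) → ℝ | s < f k j ↔ (j : ℕ) < m k}
              = {f | s < f k j} := by ext f; simp [h]
          rw [this]; exact measurableSet_lt measurable_const (heval k j)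
        · have : {f : (k : Fin L) → Fin (n k) → ℝ | s < f k j ↔ (j : ℕ) < m k}
              = {f | s < f k j}ᶜ := by ext f; simp [h]
          rw [this]; exact (measurableSet_lt measurable_const (heval k j)).compl
      · by_cases h : (j : ℕ) < l k
        · have : {f : (k : Fin L) → Fin (n k) → ℝ | τ < f k j ↔ (j : ℕ) < l k}
              = {f | τ < f k j} := by ext f; simp [h]
          rw [this]; exact measurableSet_lt measurable_const (heval k j)
        · have : {f : (k : Fin L) → Fin (n k) → ℝ | τ < f k j ↔ (j : ℕ) < l k}
              = {f | τ < f k j}ᶜ := by ext f; simp [h]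
          rw [this]; exact (measurableSet_lt measurable_const (heval k j)).compl
    have key : (fun ω (k : Fin L) (j : Fin (n k)) => T k (σ k j) ω) ⁻¹' A₀ = E p := by
      ext ω
      simp only [Set.mem_preimage, hA₀, Set.mem_setOf_eq, hEdef]
      constructor
      · intro h k j'
        have h' := h k ((σ k).symm j')
        rw [(σ k).apply_symm_apply] at h'
        constructor
        · rw [h'.1, ← hσa k ((σ k).symm j'), (σ k).apply_symm_apply]
        · rw [h'.2, ← hσb k ((σ k).symm j'), (σ k).apply_symm_apply]
      · intro h k j
        have h' := h k (σ k j)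
        constructor
        · rw [h'.1, hσa k j]
        · rw [h'.2, hσb k j]
    have keyR : (fun ω (k : Fin L) (j : Fin (n k)) => T k j ω) ⁻¹' A₀ = R := by
      ext ω
      simp only [Set.mem_preimage, hA₀, Set.mem_setOf_eq, hRdef]
      constructor
      · intro h k r
        obtain ⟨h1, h2⟩ := h k r
        refine ⟨fun hr => h2.mpr hr, fun hr => ⟨h1.mpr hr.2, ?_⟩, fun hr => ?_⟩
        · by_contra hc
          push_neg at hc
          exact absurd (h2.mp hc) (by omega)
        · by_contra hc
          push_neg at hc
          exact absurd (h1.mp hc) (by omega)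
      · intro h k r
        obtain ⟨c1, c2, c3⟩ := h k r
        constructor
        · constructor
          · intro hlt'
            by_contra hc
            push_neg at hc
            exact absurd (c3 hc) (not_le.mpr hlt')
          · intro hr
            by_cases hrl : (r : ℕ) < l k
            · exact lt_of_le_of_lt hsτ (c1 hrl)
            · exact (c2 ⟨not_lt.mp hrl, hr⟩).1
        · constructor
          · intro hlt'
            by_contra hc
            push_neg at hc
            by_cases hrm : (r : ℕ) < m k
            · exact absurd (c2 ⟨hc, hrm⟩).2 (not_le.mpr hlt')
            · exact absurd (c3 (not_lt.mp hrm)) (not_le.mpr (lt_of_le_of_lt hsτ hlt'))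
          · exact c1

    calc P (E p) = P ((fun ω (k : Fin L) (j : Fin (n k)) => T k (σ k j) ω) ⁻¹' A₀) := by
          rw [key]
      _ = (Measure.map (fun ω (k : Fin L) (j : Fin (n k)) => T k (σ k j) ω) P) A₀ :=
          (Measure.map_apply hTσ hA₀meas).symm
      _ = (Measure.map (fun ω (k : Fin L) (j : Fin (n k)) => T k j ω) P) A₀ := by
          rw [hexch σ]
      _ = P ((fun ω (k : Fin L) (j : Fin (n k)) => T k j ω) ⁻¹' A₀) :=
          Measure.map_apply hTpath hA₀meas
      _ = P R := by rw [keyR]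
  -- step 3: compute the measure as a multiple of P R
  rw [hunion, measure_biUnion_finset hdisj (fun p _ => hEmeas p),
    Finset.sum_congr rfl hPeq, Finset.sum_const, nsmul_eq_mul, ENNReal.toReal_mul,
    ENNReal.toReal_natCast]
  -- step 4: count the pairs in S
  have hCnm : (∏ k, (Nat.choose (n k) (m k) : ℝ)) ≠ 0 := by
    rw [Finset.prod_ne_zero_iff]
    intro k _
    exact_mod_cast (Nat.choose_pos (hm k)).ne'
  have hCnl : (∏ k, (Nat.choose (n k) (l k) : ℝ)) ≠ 0 := by
    rw [Finset.prod_ne_zero_iff]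
    intro k _
    exact_mod_cast (Nat.choose_pos ((hlm k).trans (hm k))).ne'
  have hsigm : survSig n φ m * ∏ k, (Nat.choose (n k) (m k) : ℝ)
      = ∑ a : (k : Fin L) → Fin (n k) → Bool,
          if (∀ k, (univ.filter fun j => a k j = true).card = m k) ∧ φ a = true
          then (1 : ℝ) else 0 := by
    rw [survSig, div_mul_cancel₀ _ hCnm]
  have hsigl : survSig n φ l * ∏ k, (Nat.choose (n k) (l k) : ℝ)
      = ∑ b : (k : Fin L) → Fin (n k) → Bool,
          if (∀ k, (univ.filter fun j => b k j = true).card = l k) ∧ φ b = true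
          then (1 : ℝ) else 0 := by
    rw [survSig, div_mul_cancel₀ _ hCnl]
  have hcard0 : (S.card : ℝ)
      = ∑ p : ((k : Fin L) → Fin (n k) → Bool) × ((k : Fin L) → Fin (n k) → Bool),
          if ((∀ k j, p.2 k j = true → p.1 k j = true) ∧
              (∀ k, (univ.filter fun j => p.1 k j = true).card = m k) ∧
              (∀ k, (univ.filter fun j => p.2 k j = true).card = l k) ∧
              φ p.1 = true ∧ φ p.2 = false)
          then (1 : ℝ) else 0 := by
    rw [hSdef, Finset.card_filter]
    push_cast
    rfl
  have hsplit : ∀ p : ((k : Fin L) → Fin (n k) → Bool) × ((k : Fin L) → Fin (n k) → Bool),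
      (if ((∀ k j, p.2 k j = true → p.1 k j = true) ∧
              (∀ k, (univ.filter fun j => p.1 k j = true).card = m k) ∧
              (∀ k, (univ.filter fun j => p.2 k j = true).card = l k) ∧
              φ p.1 = true ∧ φ p.2 = false)
          then (1 : ℝ) else 0)
      = ((if ((∀ k j, p.2 k j = true → p.1 k j = true) ∧
              (∀ k, (univ.filter fun j => p.1 k j = true).card = m k) ∧
              (∀ k, (univ.filter fun j => p.2 k j = true).card = l k) ∧
              φ p.1 = true)
          then (1 : ℝ) else 0)
        - (if ((∀ k j, p.2 k j = true → p.1 k j = true) ∧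
              (∀ k, (univ.filter fun j => p.1 k j = true).card = m k) ∧
              (∀ k, (univ.filter fun j => p.2 k j = true).card = l k) ∧
              φ p.2 = true)
          then (1 : ℝ) else 0)) := by
    intro p
    by_cases h0 : (∀ k j, p.2 k j = true → p.1 k j = true) ∧
        (∀ k, (univ.filter fun j => p.1 k j = true).card = m k) ∧
        (∀ k, (univ.filter fun j => p.2 k j = true).card = l k)
    · obtain ⟨hba', hcm', hcl'⟩ := h0
      have hmon : φ p.2 = true → φ p.1 = true := by
        intro h2
        have hle : p.2 ≤ p.1 := by
          intro k
          intro j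
          exact Bool.le_iff_imp.mpr (hba' k j)
        have := hφ hle
        rw [h2] at this
        exact Bool.eq_true_of_true_le this
      by_cases h2 : φ p.2 = true
      · have h1 : φ p.1 = true := hmon h2
        simp [hba', hcm', hcl', h1, h2]
      · have h2' : φ p.2 = false := by simpa using h2
        by_cases h1 : φ p.1 = true
        · simp [hba', hcm', hcl', h1, h2, h2']
        · simp [hba', hcm', hcl', h1, h2, h2']
    · have hno : ∀ (q : Prop), ¬ ((∀ k j, p.2 k j = true → p.1 k j = true) ∧
          (∀ k, (univ.filter fun j => p.1 k j = true).card = m k) ∧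
          (∀ k, (univ.filter fun j => p.2 k j = true).card = l k) ∧ q) := by
        intro q hq
        exact h0 ⟨hq.1, hq.2.1, hq.2.2.1⟩
      rw [if_neg (by intro hq; exact hno _ ⟨hq.1, hq.2.1, hq.2.2.1, trivial⟩),
        if_neg (by intro hq; exact hno _ ⟨hq.1, hq.2.1, hq.2.2.1, trivial⟩),
        if_neg (by intro hq; exact hno _ ⟨hq.1, hq.2.1, hq.2.2.1, trivial⟩)]
      ring
  have hSumA :
      (∑ p : ((k : Fin L) → Fin (n k) → Bool) × ((k : Fin L) → Fin (n k) → Bool),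
          if ((∀ k j, p.2 k j = true → p.1 k j = true) ∧
              (∀ k, (univ.filter fun j => p.1 k j = true).card = m k) ∧
              (∀ k, (univ.filter fun j => p.2 k j = true).card = l k) ∧
              φ p.1 = true)
          then (1 : ℝ) else 0)
      = (survSig n φ m * ∏ k, (Nat.choose (n k) (m k) : ℝ))
          * ∏ k, (Nat.choose (m k) (l k) : ℝ) := by
    rw [Fintype.sum_prod_type]
    have hA : ∀ a : (k : Fin L) → Fin (n k) → Bool,
        (∑ b : (k : Fin L) → Fin (n k) → Bool,
          if ((∀ k j, b k j = true → a k j = true) ∧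
              (∀ k, (univ.filter fun j => a k j = true).card = m k) ∧
              (∀ k, (univ.filter fun j => b k j = true).card = l k) ∧
              φ a = true)
          then (1 : ℝ) else 0)
        = (if ((∀ k, (univ.filter fun j => a k j = true).card = m k) ∧ φ a = true)
            then (1 : ℝ) else 0) * ∏ k, (Nat.choose (m k) (l k) : ℝ) := by
      intro a
      by_cases hA' : (∀ k, (univ.filter fun j => a k j = true).card = m k) ∧ φ a = true
      · rw [if_pos hA', one_mul]
        trans ((univ.filter fun b : (k : Fin L) → Fin (n k) → Bool =>
            ∀ k, (∀ j, b k j = true → a k j = true)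
              ∧ (univ.filter fun j => b k j = true).card = l k).card : ℝ)
        · rw [← Finset.sum_boole]
          refine Finset.sum_congr rfl fun b _ => if_congr ?_ rfl rfl
          constructor
          · rintro ⟨h0', -, h2', -⟩ k
            exact ⟨h0' k, h2' k⟩
          · intro h
            exact ⟨fun k => (h k).1, hA'.1, fun k => (h k).2, hA'.2⟩
        · rw [card_pi_filter n (fun k g => (∀ j, g j = true → a k j = true)
              ∧ (univ.filter fun j => g j = true).card = l k)]
          push_cast
          refine Finset.prod_congr rfl fun k _ => ?_
          rw [count_le_card (a k) (l k), hA'.1 k]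
      · rw [if_neg hA', zero_mul]
        apply Finset.sum_eq_zero
        intro b _
        rw [if_neg]
        rintro ⟨-, h1', -, h3'⟩
        exact hA' ⟨h1', h3'⟩
    refine Eq.trans (Finset.sum_congr rfl fun a _ => hA a) ?_
    rw [← Finset.sum_mul, ← hsigm]
  have hSumB :
      (∑ p : ((k : Fin L) → Fin (n k) → Bool) × ((k : Fin L) → Fin (n k) → Bool),
          if ((∀ k j, p.2 k j = true → p.1 k j = true) ∧
              (∀ k, (univ.filter fun j => p.1 k j = true).card = m k) ∧
              (∀ k, (univ.filter fun j => p.2 k j = true).card = l k) ∧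
              φ p.2 = true)
          then (1 : ℝ) else 0)
      = (survSig n φ l * ∏ k, (Nat.choose (n k) (l k) : ℝ))
          * ∏ k, (Nat.choose (n k - l k) (n k - m k) : ℝ) := by
    rw [Fintype.sum_prod_type, Finset.sum_comm]
    have hB : ∀ b : (k : Fin L) → Fin (n k) → Bool,
        (∑ a : (k : Fin L) → Fin (n k) → Bool,
          if ((∀ k j, b k j = true → a k j = true) ∧
              (∀ k, (univ.filter fun j => a k j = true).card = m k) ∧
              (∀ k, (univ.filter fun j => b k j = true).card = l k) ∧
              φ b = true)
          then (1 : ℝ) else 0)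
        = (if ((∀ k, (univ.filter fun j => b k j = true).card = l k) ∧ φ b = true)
            then (1 : ℝ) else 0) * ∏ k, (Nat.choose (n k - l k) (n k - m k) : ℝ) := by
      intro b
      by_cases hB' : (∀ k, (univ.filter fun j => b k j = true).card = l k) ∧ φ b = true
      · rw [if_pos hB', one_mul]
        trans ((univ.filter fun a : (k : Fin L) → Fin (n k) → Bool =>
            ∀ k, (∀ j, b k j = true → a k j = true)
              ∧ (univ.filter fun j => a k j = true).card = m k).card : ℝ)
        · rw [← Finset.sum_boole]
          refine Finset.sum_congr rfl fun a _ => if_congr ?_ rfl rfl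
          constructor
          · rintro ⟨h0', h1', -, -⟩ k
            exact ⟨h0' k, h1' k⟩
          · intro h
            exact ⟨fun k => (h k).1, fun k => (h k).2, hB'.1, hB'.2⟩
        · rw [card_pi_filter n (fun k g => (∀ j, b k j = true → g j = true)
              ∧ (univ.filter fun j => g j = true).card = m k)]
          push_cast
          refine Finset.prod_congr rfl fun k _ => ?_
          rw [count_ge_card (b k) (m k) (hm k), hB'.1 k]
      · rw [if_neg hB', zero_mul]
        apply Finset.sum_eq_zero
        intro a _
        rw [if_neg]
        rintro ⟨-, -, h2', h3'⟩
        exact hB' ⟨h2', h3'⟩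
    refine Eq.trans (Finset.sum_congr rfl fun b _ => hB b) ?_
    rw [← Finset.sum_mul, ← hsigl]
  have hprod : (∏ k, (Nat.choose (n k - l k) (n k - m k) : ℝ)) * ∏ k, (Nat.choose (n k) (l k) : ℝ)
      = (∏ k, (Nat.choose (n k) (m k) : ℝ)) * ∏ k, (Nat.choose (m k) (l k) : ℝ) := by
    rw [← Finset.prod_mul_distrib, ← Finset.prod_mul_distrib]
    refine Finset.prod_congr rfl fun k _ => ?_
    have h5 := hlm k
    have h6 := hm k
    have h2 : Nat.choose (n k - l k) (n k - m k) = Nat.choose (n k - l k) (m k - l k) := by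
      have h3 : n k - m k = (n k - l k) - (m k - l k) := by omega
      rw [h3]
      exact Nat.choose_symm (by omega)
    have h4 : Nat.choose (n k - l k) (n k - m k) * Nat.choose (n k) (l k)
        = Nat.choose (n k) (m k) * Nat.choose (m k) (l k) := by
      rw [h2, Nat.choose_mul (n := n k) (hlm k), Nat.mul_comm]
    exact_mod_cast congrArg (fun x : ℕ => (x : ℝ)) h4
  have hcard : (S.card : ℝ) = (survSig n φ m - survSig n φ l)
      * ∏ k, (Nat.choose (n k) (m k) : ℝ) * (Nat.choose (m k) (l k) : ℝ) := by
    calc (S.card : ℝ)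
        = ∑ p : ((k : Fin L) → Fin (n k) → Bool) × ((k : Fin L) → Fin (n k) → Bool),
          if ((∀ k j, p.2 k j = true → p.1 k j = true) ∧
              (∀ k, (univ.filter fun j => p.1 k j = true).card = m k) ∧
              (∀ k, (univ.filter fun j => p.2 k j = true).card = l k) ∧
              φ p.1 = true ∧ φ p.2 = false)
          then (1 : ℝ) else 0 := hcard0
      _ = (∑ p : ((k : Fin L) → Fin (n k) → Bool) × ((k : Fin L) → Fin (n k) → Bool),
          if ((∀ k j, p.2 k j = true → p.1 k j = true) ∧
              (∀ k, (univ.filter fun j => p.1 k j = true).card = m k) ∧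
              (∀ k, (univ.filter fun j => p.2 k j = true).card = l k) ∧
              φ p.1 = true)
          then (1 : ℝ) else 0)
          - (∑ p : ((k : Fin L) → Fin (n k) → Bool) × ((k : Fin L) → Fin (n k) → Bool),
          if ((∀ k j, p.2 k j = true → p.1 k j = true) ∧
              (∀ k, (univ.filter fun j => p.1 k j = true).card = m k) ∧
              (∀ k, (univ.filter fun j => p.2 k j = true).card = l k) ∧
              φ p.2 = true)
          then (1 : ℝ) else 0) := by
          rw [← Finset.sum_sub_distrib]
          exact Finset.sum_congr rfl fun p _ => hsplit p
      _ = (survSig n φ m * ∏ k, (Nat.choose (n k) (m k) : ℝ))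
            * ∏ k, (Nat.choose (m k) (l k) : ℝ)
          - (survSig n φ l * ∏ k, (Nat.choose (n k) (l k) : ℝ))
            * ∏ k, (Nat.choose (n k - l k) (n k - m k) : ℝ) := by
          rw [hSumA, hSumB]
      _ = (survSig n φ m - survSig n φ l)
            * ∏ k, (Nat.choose (n k) (m k) : ℝ) * (Nat.choose (m k) (l k) : ℝ) := by
          rw [Finset.prod_mul_distrib]
          linear_combination (- survSig n φ l) * hprod
  rw [hcard]
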